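/- arXiv:1303.4150 — 2 statements merged into one kernel-verified Lean document; each statement's English description precedes it below -/
import Mathlib

section
/- Each permutation of {1,...,n} appears exactly once as a contiguous substring of M_n. -/
/-- All length-`n` windows of `s`. -/
def windows (n : ℕ) (s : List ℕ) : List (List ℕ) :=
  (List.range (s.length + 1 - n)).map fun i => (s.drop i).take n

/-- The permutations of `{1,…,n}` in order of first appearance as substrings of `s`. -/
def permsOrder (n : ℕ) (s : List ℕ) : List (List ℕ) :=
  (((windows n s).filter fun w => decide (w.Perm (List.range' 1 n))).reverse.dedup).reverse

/-- Length of the maximal overlap: the longest suffix of `s` that is a prefix of `t`. -/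
def ov (s t : List ℕ) : ℕ :=
  ((List.range (min s.length t.length + 1)).filter fun l => (t.take l).isSuffixOf s).foldr max 0

/-- Concatenate with maximal overlap. -/
def mergeOv (s t : List ℕ) : List ℕ := s ++ t.drop (ov s t)

/-- The recursively constructed superpermutation `M_n`. -/
def Mrec : ℕ → List ℕ
  | 0 => []
  | 1 => [1]
  | n + 2 =>
      ((permsOrder (n + 1) (Mrec (n + 1))).map fun P => P ++ [n + 2] ++ P).foldl mergeOv []

open List


lemma foldr_max_mem (l : List ℕ) : l.foldr max 0 = 0 ∨ l.foldr max 0 ∈ l := by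
  induction l with
  | nil => left; rfl
  | cons a l ih =>
    simp only [foldr_cons]
    rcases Nat.le_total a (l.foldr max 0) with h1 | h1
    · rw [Nat.max_eq_right h1]; rcases ih with h | h
      · left; exact h
      · right; exact mem_cons_of_mem _ h
    · rw [Nat.max_eq_left h1]; right; exact mem_cons_self

lemma foldr_max_le {l : List ℕ} {n : ℕ} (h : ∀ x ∈ l, x ≤ n) : l.foldr max 0 ≤ n := by
  induction l with
  | nil => simp
  | cons a l ih =>
    simp only [foldr_cons, max_le_iff]
    exact ⟨h a (mem_cons_self), ih fun x hx => h x (mem_cons_of_mem _ hx)⟩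

lemma ov_suffix (s u : List ℕ) : (u.take (ov s u)) <:+ s := by
  rcases foldr_max_mem ((List.range (min s.length u.length + 1)).filter
      fun l => (u.take l).isSuffixOf s) with h | h
  · rw [ov, h]; simp
  · rw [ov]
    have := (mem_filter.1 h).2
    simpa [isSuffixOf_iff_suffix] using this

lemma ov_le_of {s u : List ℕ} {n : ℕ} (h : ∀ l, (u.take l) <:+ s → l ≤ n) : ov s u ≤ n := by
  apply foldr_max_le
  intro x hx
  exact h x (by simpa [isSuffixOf_iff_suffix] using (mem_filter.1 hx).2)

/-- suffix of an append of length ≤ right part is a suffix of the right part -/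
lemma suffix_right {S X Y : List ℕ} (h : S <:+ X ++ Y) (hl : S.length ≤ Y.length) : S <:+ Y := by
  obtain ⟨W, hW⟩ := h
  have hlen : X.length ≤ W.length := by
    have := congrArg List.length hW
    simp at this; omega
  refine ⟨W.drop X.length, ?_⟩
  have := congrArg (List.drop X.length) hW
  rwa [List.drop_append_of_le_length hlen, List.drop_left] at this

/-- glue with separator t -/
def glue (t : ℕ) : List (List ℕ) → List ℕ
  | [] => []
  | [A] => A
  | A :: B :: As => A ++ t :: glue t (B :: As)

lemma glue_cons (t : ℕ) (A : List ℕ) {As : List (List ℕ)} (h : As ≠ []) :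
    glue t (A :: As) = A ++ t :: glue t As := by
  cases As with
  | nil => exact absurd rfl h
  | cons B As => rfl

lemma glue_snoc (t : ℕ) {As : List (List ℕ)} (C : List ℕ) (h : As ≠ []) :
    glue t (As ++ [C]) = glue t As ++ t :: C := by
  induction As with
  | nil => exact absurd rfl h
  | cons A As ih =>
    cases As with
    | nil => rfl
    | cons B As =>
      rw [cons_append, glue_cons t A (by simp), glue_cons t A (by simp), ih (by simp)]
      simp

lemma glue_extend (t : ℕ) (Xs : List (List ℕ)) (C D E : List ℕ) :
    glue t (Xs ++ [C ++ D, E]) = glue t (Xs ++ [C]) ++ (D ++ t :: E) := by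
  induction Xs with
  | nil => simp [glue]
  | cons X Xs ih =>
    rw [cons_append, cons_append, glue_cons t X (by simp), glue_cons t X (by simp), ih]
    simp

/-- chunk structure of a glued superpermutation string -/
inductive Chunks (t n : ℕ) : List (List ℕ) → List (List ℕ) → Prop
  | single (A : List ℕ) (h1 : t ∉ A) (h2 : n ≤ A.length) : Chunks t n [A] []
  | cons (A P B : List ℕ) (As L : List (List ℕ)) (h1 : t ∉ A) (h2 : n ≤ A.length)
      (h3 : A.drop (A.length - n) = P) (h4 : B.take n = P)
      (h5 : Chunks t n (B :: As) L) : Chunks t n (A :: B :: As) (P :: L)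

lemma Chunks.length_eq {t n : ℕ} {As L : List (List ℕ)} (h : Chunks t n As L) :
    As.length = L.length + 1 := by
  induction h with
  | single A h1 h2 => rfl
  | cons A P B As L h1 h2 h3 h4 h5 ih => simp at ih ⊢; omega

lemma chunks_extend {t n : ℕ} {As L : List (List ℕ)} (h : Chunks t n As L)
    (C : List ℕ) (hC : As.getLast? = some C) (D P' : List ℕ)
    (hD : t ∉ D) (hP' : t ∉ P') (hlen : P'.length = n)
    (hdrop : (C ++ D).drop ((C ++ D).length - n) = P') :
    Chunks t n (As.dropLast ++ [C ++ D, P']) (L ++ [P']) := by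
  induction h with
  | single A h1 h2 =>
    have hAC : A = C := by simpa using hC
    subst hAC
    have hgl : ([A].dropLast ++ [A ++ D, P'] : List (List ℕ)) = [A ++ D, P'] := by
      simp
    rw [hgl]
    exact Chunks.cons (A ++ D) P' P' [] []
      (by simp [h1, hD, mem_append]) (by simp; omega) hdrop
      (by simpa using take_of_length_le (le_of_eq (by omega)))
      (Chunks.single P' hP' (by omega))
  | cons A P B As L h1 h2 h3 h4 h5 ih =>
    have hC' : (B :: As).getLast? = some C := by
      rw [← hC]; rfl
    have ih' := ih hC'
    have hBlen : n ≤ B.length := by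
      cases h5 with
      | single _ _ hb => exact hb
      | cons _ _ _ _ _ _ hb _ _ _ => exact hb
    cases As with
    | nil =>
      have hBC : B = C := by simpa using hC'
      subst hBC
      have e1 : ((B :: []).dropLast ++ [B ++ D, P'] : List (List ℕ)) = [B ++ D, P'] := by simp
      rw [e1] at ih'
      have e2 : ((A :: B :: []).dropLast ++ [B ++ D, P'] : List (List ℕ))
          = A :: [B ++ D, P'] := by simp
      rw [e2]
      exact Chunks.cons A P (B ++ D) _ _ h1 h2 h3
        (by rw [take_append_of_le_length hBlen, h4]) ih'
    | cons B2 As2 =>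
      have e2 : ((A :: B :: B2 :: As2).dropLast ++ [C ++ D, P'] : List (List ℕ))
          = A :: ((B :: B2 :: As2).dropLast ++ [C ++ D, P']) := by simp
      rw [e2]
      have e3 : (B :: B2 :: As2).dropLast ++ [C ++ D, P']
          = B :: ((B2 :: As2).dropLast ++ [C ++ D, P']) := by simp
      rw [e3] at ih' ⊢
      exact Chunks.cons A P B _ _ h1 h2 h3 h4 ih'

/-- window list of an append decomposes -/
lemma windows_append {k : ℕ} (X Y : List ℕ) (h : k ≤ Y.length + 1) :
    windows k (X ++ Y) =
      ((List.range X.length).map fun i => ((X ++ Y).drop i).take k) ++ windows k Y := by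
  unfold windows
  have hl : (X ++ Y).length + 1 - k = X.length + (Y.length + 1 - k) := by
    simp [List.length_append]; omega
  rw [hl, List.range_add, List.map_append]
  congr 1
  rw [List.map_map]
  apply List.map_congr_left
  intro i hi
  simp only [Function.comp_apply]
  congr 1
  rw [List.drop_append]
  have : X.length + i - X.length = i := by omega
  rw [List.drop_eq_nil_of_le (by omega), this, nil_append]

/-- rigidity of lists with a single marker -/
lemma sandwich_inj {t : ℕ} : ∀ {x u y v : List ℕ}, t ∉ x → t ∉ u →
    x ++ t :: y = u ++ t :: v → x = u ∧ y = v := by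
  intro x
  induction x with
  | nil =>
    intro u y v _ hu h
    cases u with
    | nil => simpa using h
    | cons b u' =>
      simp only [nil_append, cons_append, cons.injEq] at h
      exact absurd (h.1 ▸ mem_cons_self) hu
  | cons a x' ih =>
    intro u y v hx hu h
    cases u with
    | nil =>
      simp only [cons_append, nil_append, cons.injEq] at h
      exact absurd (h.1 ▸ mem_cons_self) hx
    | cons b u' =>
      simp only [cons_append, cons.injEq] at h
      obtain ⟨rfl, h2⟩ := h
      have := ih (fun hm => hx (mem_cons_of_mem _ hm)) (fun hm => hu (mem_cons_of_mem _ hm)) h2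
      exact ⟨by rw [this.1], this.2⟩

lemma glue_cons_exists (t : ℕ) (A : List ℕ) (As : List (List ℕ)) :
    ∃ R, glue t (A :: As) = A ++ R := by
  cases As with
  | nil => exact ⟨[], by simp [glue]⟩
  | cons B As => exact ⟨t :: glue t (B :: As), rfl⟩

lemma count_windows_glue {t n : ℕ} {u v : List ℕ} (hu : t ∉ u) (hv : t ∉ v)
    (hq : u.length + v.length = n) :
    ∀ {As L : List (List ℕ)}, Chunks t n As L →
      count (u ++ t :: v) (windows (n + 1) (glue t As)) = count (v ++ u) L := by
  intro As L h
  induction h with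
  | single A h1 h2 =>
    show count (u ++ t :: v) (windows (n+1) A) = 0
    rw [count_eq_zero]
    intro hmem
    obtain ⟨i, _, hi⟩ := mem_map.1 hmem
    have : t ∈ A := mem_of_mem_drop (mem_of_mem_take (hi ▸ (by simp : t ∈ u ++ t :: v)))
    exact h1 this
  | cons A P B As' L' h1 h2 h3 h4 h5 ih =>
    set w := u ++ t :: v with hw
    set q := u.length with hqdef
    have hvlen : v.length = n - q := by omega
    have hqn : q ≤ n := by omega
    -- facts about M'
    have hBlen : n ≤ B.length := by
      cases h5 with
      | single _ _ hb => exact hb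
      | cons _ _ _ _ _ _ hb _ _ _ => exact hb
    obtain ⟨M', hM'⟩ : ∃ x, glue t (B :: As') = x := ⟨_, rfl⟩
    rw [hM'] at ih
    obtain ⟨R, hR⟩ := glue_cons_exists t B As'
    rw [hM'] at hR
    have hM'len : n ≤ M'.length := by
      rw [hR, length_append]; omega
    have htakeM' : M'.take n = P := by
      rw [hR, take_append_of_le_length hBlen, h4]
    have htP : t ∉ P := fun hm => h1 (mem_of_mem_drop (h3 ▸ hm))
    -- decompose
    have hglue : glue t (A :: B :: As') = (A ++ [t]) ++ M' := by
      rw [glue_cons t A (by simp), hM', append_assoc, singleton_append]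
    rw [hglue, windows_append _ _ (by omega), count_append]
    have hXlen : (A ++ [t]).length = A.length + 1 := by simp
    -- the window function
    have hwin : ∀ i ≤ A.length,
        (((A ++ [t] ++ M').drop i).take (n+1) = w) ↔ (i = A.length - q ∧ v ++ u = P) := by
      intro i hi
      have hdropi : (A ++ [t] ++ M').drop i = A.drop i ++ t :: M' := by
        rw [append_assoc, drop_append_of_le_length hi]; rfl
      rw [hdropi]
      by_cases hd : n + 1 ≤ A.length - i
      · rw [take_append_of_le_length (by rw [length_drop]; omega)]
        constructor
        · intro he
          have htw : t ∈ w := by rw [hw]; exact mem_append_right _ (mem_cons_self)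
          have : t ∈ A := mem_of_mem_drop (mem_of_mem_take (he ▸ htw))
          exact absurd this h1
        · rintro ⟨rfl, -⟩; omega
      · push_neg at hd
        have hd' : A.length - i ≤ n := by omega
        have hsplit : (A.drop i ++ t :: M').take (n+1)
            = A.drop i ++ t :: M'.take (n - (A.length - i)) := by
          rw [take_append, take_of_length_le (by rw [length_drop]; omega)]
          congr 1
          have : n + 1 - (A.drop i).length = (n - (A.length - i)) + 1 := by
            rw [length_drop]; omega
          rw [this, take_succ_cons]
        rw [hsplit]
        constructor
        · intro he
          have htfree : t ∉ M'.take (n - (A.length - i)) := by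
            intro hm
            have he2 : M'.take (n - (A.length - i)) = (M'.take n).take (n - (A.length - i)) := by
              rw [take_take, Nat.min_eq_left (by omega)]
            rw [he2, htakeM'] at hm
            exact htP (mem_of_mem_take hm)
          have hsand := sandwich_inj (fun hm => h1 (mem_of_mem_drop hm)) hu he
          have hlen1 : A.length - i = q := by
            have := congrArg List.length hsand.1
            rw [length_drop] at this; omega
          have hieq : i = A.length - q := by omega
          refine ⟨hieq, ?_⟩
          have hP1 : A.drop i = (A.drop (A.length - n)).drop (n - q) := by
            rw [drop_drop]; congr 1; omega
          have hu' : P.drop (n - q) = u := by rw [← h3, ← hP1, hsand.1]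
          have hv' : P.take (n - q) = v := by
            rw [← htakeM', take_take, Nat.min_eq_left (by omega), ← hsand.2]
            congr 1; omega
          rw [← hu', ← hv', take_append_drop]
        · rintro ⟨rfl, hPvu⟩
          have hd2 : A.length - (A.length - q) = q := by omega
          rw [hd2]
          have h1' : A.drop (A.length - q) = u := by
            have : A.drop (A.length - q) = (A.drop (A.length - n)).drop (n - q) := by
              rw [drop_drop]; congr 1; omega
            rw [this, h3, ← hPvu, ← hvlen, drop_left]
          have h2' : M'.take (n - q) = v := by
            rw [← Nat.min_eq_left (show n - q ≤ n by omega), ← take_take, htakeM',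
              ← hPvu, ← hvlen, take_left]
          rw [h1', h2']
    -- count over the boundary windows
    have hcount1 : count w (((range (A ++ [t]).length).map
        fun i => ((A ++ [t] ++ M').drop i).take (n+1)))
        = if v ++ u = P then 1 else 0 := by
      rw [count_eq_countP, countP_map, hXlen]
      simp only [Function.comp_def]
      by_cases hP : v ++ u = P
      · rw [if_pos hP]
        have : countP (fun i => (((A ++ [t] ++ M').drop i).take (n+1) == w))
            (range (A.length + 1))
            = countP (fun i => i == A.length - q) (range (A.length + 1)) := by
          apply countP_congr
          intro i hi
          have hi' : i ≤ A.length := by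
            have := mem_range.1 hi; omega
          simp only [Function.comp_apply, beq_iff_eq]
          rw [hwin i hi']
          constructor
          · rintro ⟨h, -⟩; exact h
          · rintro rfl; exact ⟨rfl, hP⟩
        rw [this]
        have : countP (fun i => i == A.length - q) (range (A.length + 1))
            = count (A.length - q) (range (A.length + 1)) := by
          rw [count_eq_countP]
        rw [this]
        exact count_eq_one_of_mem nodup_range (mem_range.2 (by omega))
      · rw [if_neg hP, countP_eq_zero]
        intro i hi
        have hi' : i ≤ A.length := by
          have := mem_range.1 hi; omega
        simp only [Function.comp_apply, beq_iff_eq]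
        rw [hwin i hi']
        rintro ⟨-, h⟩; exact hP h
    rw [hcount1, ih, count_cons]
    simp only [beq_iff_eq]
    by_cases hP : P = v ++ u
    · rw [if_pos hP, if_pos hP.symm]; omega
    · rw [if_neg hP, if_neg (fun h => hP h.symm)]; omega

lemma ov_nil (u : List ℕ) : ov [] u = 0 := by
  simp [ov, List.range_succ, List.isSuffixOf]

lemma ov_bound {t n : ℕ} {Z Pl P' : List ℕ} (hPl : Pl.length = n) (hP' : P'.length = n)
    (ht1 : t ∉ Pl) (ht2 : t ∉ P') (hne : P' ≠ Pl) :
    ov (Z ++ t :: Pl) (P' ++ t :: P') ≤ n := by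
  apply ov_le_of
  intro l hsuf
  by_contra hlt
  push_neg at hlt
  set acc := Z ++ t :: Pl with hacc
  set Q := P' ++ t :: P' with hQ
  have hQlen : Q.length = 2 * n + 1 := by simp [hQ, hP']; omega
  have hacclen : acc.length = Z.length + n + 1 := by simp [hacc, hPl]; omega
  have hSlen : (Q.take l).length = min l (2 * n + 1) := by simp [hQlen]
  have hSle : (Q.take l).length ≤ acc.length := hsuf.length_le
  by_cases hcase : 2 * n + 1 ≤ l
  · have hSQ : Q.take l = Q := take_of_length_le (by omega)
    rw [hSQ] at hsuf
    obtain ⟨W, hW⟩ := hsuf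
    have hW' : (W ++ (P' ++ [t])) ++ P' = (Z ++ [t]) ++ Pl := by
      simp only [append_assoc, singleton_append, cons_append, nil_append]
      exact hW
    have hPP : P' = Pl := (append_inj' hW' (by rw [hP', hPl])).2
    exact hne hPP
  · push_neg at hcase
    have hlen2 : (Q.take l).length = l := by omega
    have hm : l - (n + 1) < n := by omega
    have hSdrop : Q.take l = acc.drop (acc.length - l) := by
      have h1 := suffix_iff_eq_drop.1 hsuf
      rwa [hlen2] at h1
    have hT : (Q.take l).drop (l - (n + 1)) = t :: Pl := by
      rw [hSdrop, drop_drop]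
      have he : acc.length - l + (l - (n + 1)) = Z.length := by omega
      rw [he, hacc]
      exact drop_left
    have hT2 : (Q.take l).drop (l - (n + 1)) = (Q.drop (l - (n + 1))).take (n + 1) := by
      rw [drop_take]
      congr 1
      omega
    have hQdrop : Q.drop (l - (n + 1)) = P'.drop (l - (n + 1)) ++ t :: P' := by
      rw [hQ, drop_append_of_le_length (by omega)]
    have hne2 : P'.drop (l - (n + 1)) ≠ [] := by
      intro h
      have := congrArg List.length h
      simp [hP'] at this
      omega
    obtain ⟨x, X', hx⟩ := exists_cons_of_ne_nil hne2
    rw [hT2, hQdrop, hx, cons_append, take_succ_cons] at hT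
    have hxt : x = t := (cons.injEq _ _ _ _ ▸ hT).1
    have : x ∈ P' := by
      have : x ∈ P'.drop (l - (n+1)) := hx ▸ mem_cons_self
      exact mem_of_mem_drop this
    exact ht2 (hxt ▸ this)

lemma nodup_concat_not_mem {X : List (List ℕ)} {a : List ℕ} (h : (X ++ [a]).Nodup) :
    a ∉ X := by
  intro hmem
  rcases nodup_append.1 h with ⟨-, -, hdisj⟩
  exact hdisj a hmem a (mem_singleton_self a) rfl

lemma fold_glue {t n : ℕ} :
    ∀ (L' : List (List ℕ)) (P0 : List ℕ),
      (∀ P ∈ L' ++ [P0], t ∉ P ∧ P.length = n) → (L' ++ [P0]).Nodup →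
      ∃ Xs, List.foldl mergeOv [] ((L' ++ [P0]).map (fun P => P ++ t :: P))
          = glue t (Xs ++ [P0])
        ∧ Chunks t n (Xs ++ [P0]) (L' ++ [P0]) := by
  intro L'
  induction L' using List.reverseRecOn with
  | nil =>
    intro P0 hmem hnd
    obtain ⟨ht0, hl0⟩ := hmem P0 (by simp)
    refine ⟨[P0], ?_, ?_⟩
    · show List.foldl mergeOv [] [P0 ++ t :: P0] = glue t [P0, P0]
      show mergeOv [] (P0 ++ t :: P0) = glue t [P0, P0]
      rw [mergeOv, ov_nil]
      simp [glue]
    · exact Chunks.cons P0 P0 P0 [] [] ht0 (le_of_eq hl0.symm)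
        (by rw [hl0, Nat.sub_self, drop_zero]) (take_of_length_le (le_of_eq hl0))
        (Chunks.single P0 ht0 (le_of_eq hl0.symm))
  | append_singleton L'' Pl ih =>
    intro P0 hmem hnd
    have hmem' : ∀ P ∈ L'' ++ [Pl], t ∉ P ∧ P.length = n := by
      intro P hP
      exact hmem P (mem_append_left [P0] hP)
    have hnd' : (L'' ++ [Pl]).Nodup := by
      exact List.Nodup.sublist (sublist_append_left (L'' ++ [Pl]) [P0]) hnd
    obtain ⟨Xs, hacc, hch⟩ := ih Pl hmem' hnd'
    obtain ⟨htP0, hlP0⟩ := hmem P0 (by simp)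
    obtain ⟨htPl, hlPl⟩ := hmem Pl (mem_append_left [P0] (mem_append_right _ (mem_singleton_self _)))
    have hXsne : Xs ≠ [] := by
      have := hch.length_eq
      simp at this
      intro h; rw [h] at this; simp at this
    have haccglue : glue t (Xs ++ [Pl]) = glue t Xs ++ t :: Pl := glue_snoc t Pl hXsne
    have hne : P0 ≠ Pl := by
      intro h
      have hP0mem : P0 ∈ L'' ++ [Pl] := by
        rw [h]; exact mem_append_right _ (mem_singleton_self _)
      exact nodup_concat_not_mem hnd hP0mem
    -- fold step
    have hfold : List.foldl mergeOv [] (((L'' ++ [Pl]) ++ [P0]).map (fun P => P ++ t :: P))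
        = mergeOv (List.foldl mergeOv [] ((L'' ++ [Pl]).map (fun P => P ++ t :: P)))
            (P0 ++ t :: P0) := by
      rw [map_append]
      simp [foldl_concat]
    set r := ov (glue t (Xs ++ [Pl])) (P0 ++ t :: P0) with hr
    have hrle : r ≤ n := by
      rw [hr, haccglue]
      exact ov_bound hlPl hlP0 htPl htP0 hne
    have hsuf : (P0 ++ t :: P0).take r <:+ glue t (Xs ++ [Pl]) := ov_suffix _ _
    have htake : (P0 ++ t :: P0).take r = P0.take r := by
      rw [take_append_of_le_length (by omega)]
    rw [htake] at hsuf
    have hsufPl : P0.take r <:+ Pl := by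
      apply suffix_right (Y := Pl) (X := glue t Xs ++ [t])
      · rwa [haccglue, ← singleton_append, ← append_assoc] at hsuf
      · rw [length_take]; omega
    obtain ⟨W, hW⟩ := hsufPl
    have hWlen : W.length = n - r := by
      have := congrArg List.length hW
      simp [hlPl] at this
      omega
    have hCeq : Pl ++ P0.drop r = W ++ P0 := by
      rw [← hW, append_assoc, take_append_drop]
    have hdropC : (Pl ++ P0.drop r).drop ((Pl ++ P0.drop r).length - n) = P0 := by
      rw [hCeq]
      have : (W ++ P0).length - n = W.length := by rw [length_append, hlP0]; omega
      rw [this, drop_left]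
    have hchext := chunks_extend hch Pl (by simp) (P0.drop r) P0
      (fun hm => htP0 (mem_of_mem_drop hm)) htP0 hlP0 hdropC
    rw [dropLast_concat] at hchext
    have hdropQ : (P0 ++ t :: P0).drop r = P0.drop r ++ t :: P0 := by
      rw [drop_append_of_le_length (by omega)]
    have hlistE : (Xs ++ [Pl ++ P0.drop r]) ++ [P0] = Xs ++ [Pl ++ P0.drop r, P0] := by
      simp
    refine ⟨Xs ++ [Pl ++ P0.drop r], ?_, ?_⟩
    · rw [hfold, hacc, mergeOv, ← hr, hdropQ, hlistE, glue_extend t Xs Pl (P0.drop r) P0]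
    · rw [hlistE]
      exact hchext


lemma split_first {t : ℕ} {w : List ℕ} (h : t ∈ w) : ∃ u v, w = u ++ t :: v ∧ t ∉ u := by
  induction w with
  | nil => cases h
  | cons a w ih =>
    by_cases hat : a = t
    · exact ⟨[], w, by rw [hat]; rfl, by simp⟩
    · have h' : t ∈ w := by
        rcases mem_cons.1 h with h2 | h2
        · exact absurd h2.symm hat
        · exact h2
      obtain ⟨u, v, he, hu⟩ := ih h'
      refine ⟨a :: u, v, by rw [cons_append, he], ?_⟩
      intro hmem
      rcases mem_cons.1 hmem with h2 | h2
      · exact hat h2.symm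
      · exact hu h2

lemma count_one_of_nodup_mem {l : List (List ℕ)} {a : List ℕ}
    (hnd : l.Nodup) (hmem : a ∈ l) : count a l = 1 := by
  induction l with
  | nil => cases hmem
  | cons b l ih =>
    rw [count_cons]
    by_cases hab : b = a
    · subst hab
      have hbl : b ∉ l := (nodup_cons.1 hnd).1
      rw [count_eq_zero.2 hbl]
      simp
    · have ha : a ∈ l := by
        rcases mem_cons.1 hmem with h | h
        · exact absurd h.symm hab
        · exact h
      rw [ih (nodup_cons.1 hnd).2 ha]
      simp [hab]

lemma permsOrder_mem {n : ℕ} {s : List ℕ} {P : List ℕ} (h : P ∈ permsOrder n s) :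
    P.Perm (List.range' 1 n) := by
  unfold permsOrder at h
  rw [mem_reverse, mem_dedup, mem_reverse] at h
  simpa using of_mem_filter h

lemma permsOrder_nodup (n : ℕ) (s : List ℕ) : (permsOrder n s).Nodup := by
  unfold permsOrder
  exact nodup_reverse.2 (nodup_dedup _)

lemma permsOrder_count {n : ℕ} {s P : List ℕ} (hP : P.Perm (List.range' 1 n))
    (hmem : ∃ i ∈ List.range (s.length + 1 - n), (s.drop i).take n = P) :
    count P (permsOrder n s) = 1 := by
  unfold permsOrder
  rw [count_reverse]
  apply count_one_of_nodup_mem (nodup_dedup _)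
  rw [mem_dedup, mem_reverse, mem_filter]
  constructor
  · obtain ⟨i, hi, hie⟩ := hmem
    unfold windows
    exact mem_map.2 ⟨i, hi, hie⟩
  · simpa using hP

lemma step_lemma (n : ℕ) (hn : 1 ≤ n)
    (IH : ∀ w, w.Perm (List.range' 1 n) →
      ((List.range ((Mrec n).length + 1 - n)).countP
        fun i => decide (((Mrec n).drop i).take n = w)) = 1)
    (w : List ℕ) (hw : w.Perm (List.range' 1 (n + 1))) :
    ((List.range ((Mrec (n + 1)).length + 1 - (n + 1))).countP
      fun i => decide (((Mrec (n + 1)).drop i).take (n + 1) = w)) = 1 := by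
  obtain ⟨k, rfl⟩ : ∃ k, n = k + 1 := ⟨n - 1, by omega⟩
  have hMrec : Mrec (k + 2) = List.foldl mergeOv []
      ((permsOrder (k + 1) (Mrec (k + 1))).map (fun P => P ++ (k + 2) :: P)) := by
    rw [Mrec]
    simp only [append_assoc, singleton_append]
  set t := k + 2 with ht
  set L := permsOrder (k + 1) (Mrec (k + 1)) with hLdef
  have hLperm : ∀ P ∈ L, P.Perm (range' 1 (k + 1)) := fun P h => permsOrder_mem h
  have hfacts : ∀ P ∈ L, t ∉ P ∧ P.length = k + 1 := by
    intro P hP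
    have hp := hLperm P hP
    constructor
    · intro htP
      have := (hp.mem_iff).1 htP
      rw [mem_range'_1] at this
      omega
    · rw [hp.length_eq, length_range']
  have hLnd : L.Nodup := permsOrder_nodup _ _
  have hLcount : ∀ P, P.Perm (range' 1 (k + 1)) → count P L = 1 := by
    intro P hP
    apply permsOrder_count hP
    have h1 := IH P hP
    have h2 : 0 < countP (fun i => decide (((Mrec (k + 1)).drop i).take (k + 1) = P))
        (range ((Mrec (k + 1)).length + 1 - (k + 1))) := by
      rw [h1]; omega
    obtain ⟨i, hi, hdec⟩ := countP_pos_iff.1 h2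
    exact ⟨i, hi, by simpa using hdec⟩
  have hLne : L ≠ [] := by
    intro h
    have := hLcount (range' 1 (k + 1)) (Perm.refl _)
    rw [h] at this
    simp at this
  obtain ⟨L', P0, hL'⟩ : ∃ L' P0, L = L' ++ [P0] := by
    rcases eq_nil_or_concat L with h | ⟨L', P0, h⟩
    · exact absurd h hLne
    · exact ⟨L', P0, by rw [h, concat_eq_append]⟩
  obtain ⟨Xs, hacc, hch⟩ := fold_glue (t := t) (n := k + 1) L' P0
    (hL' ▸ hfacts) (hL' ▸ hLnd)
  -- decompose w around its unique occurrence of t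
  have htw : t ∈ w := hw.mem_iff.2 (by rw [mem_range'_1]; omega)
  have hcnt : count t w = 1 := by
    rw [hw.count_eq]
    exact count_eq_one_of_mem nodup_range' (by rw [mem_range'_1]; omega)
  obtain ⟨u, v, hwuv, hu⟩ := split_first htw
  have hv : t ∉ v := by
    rw [hwuv, count_append, count_cons_self, count_eq_zero.2 hu] at hcnt
    exact count_eq_zero.1 (by omega)
  have hwlen : w.length = k + 2 := by rw [hw.length_eq, length_range']
  have hql : u.length + v.length = k + 1 := by
    have := congrArg List.length hwuv
    simp at this
    omega
  have hvu : (v ++ u).Perm (range' 1 (k + 1)) := by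
    have h1 : w.Perm (t :: (u ++ v)) := by rw [hwuv]; exact perm_middle
    have h2 : (range' 1 (k + 2)).Perm (t :: range' 1 (k + 1)) := by
      rw [range'_1_concat]
      have he : 1 + (k + 1) = t := by omega
      rw [he]
      have := perm_middle (a := t) (l₁ := range' 1 (k + 1)) (l₂ := ([] : List ℕ))
      simpa using this
    have h3 : (t :: (u ++ v)).Perm (t :: range' 1 (k + 1)) := h1.symm.trans (hw.trans h2)
    exact perm_append_comm.trans h3.cons_inv
  -- the main count
  have hM : Mrec (k + 2) = glue t (Xs ++ [P0]) := by
    rw [hMrec, hL']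
    exact hacc
  have hcount := count_windows_glue hu hv hql hch
  rw [← hM, ← hwuv] at hcount
  have hfin : count (v ++ u) (L' ++ [P0]) = 1 := by
    rw [← hL']
    exact hLcount _ hvu
  -- bridge from `count` over `windows` to the `countP` formulation
  have hbridge : count w (windows (k + 2) (Mrec (k + 2)))
      = ((List.range ((Mrec (k + 2)).length + 1 - (k + 2))).countP
          fun i => decide (((Mrec (k + 2)).drop i).take (k + 2) = w)) := by
    unfold windows
    rw [count_eq_countP, countP_map]
    apply countP_congr
    intro i _
    simp [Function.comp, beq_iff_eq]
  have : ((List.range ((Mrec (k + 2)).length + 1 - (k + 2))).countP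
      fun i => decide (((Mrec (k + 2)).drop i).take (k + 2) = w)) = 1 := by
    rw [← hbridge, hcount, hfin]
  exact this

theorem stmt8 (n : ℕ) (hn : 1 ≤ n) (w : List ℕ) (hw : w.Perm (List.range' 1 n)) :
    ((List.range ((Mrec n).length + 1 - n)).countP
      fun i => decide (((Mrec n).drop i).take n = w)) = 1 := by
  revert hn w
  induction n using Nat.strong_induction_on with
  | _ n ih =>
    intro hn w hw
    match n, hn, hw with
    | 1, _, hw =>
      have hw1 : w = [1] := perm_singleton.1 hw
      subst hw1
      decide
    | (k + 2), _, hw =>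
      exact step_lemma (k + 1) (by omega)
        (fun w' hw' => ih (k + 1) (by omega) (by omega) w' hw') w hw
end

section
/- For integers 2 ≤ k < n and 0 ≤ j < k!, the set of permutations of {1,...,n} whose circular shift representation has fixed first k-1 digits (determined by j) is invariant under any permutation of the roles of the symbols k+2, k+3, ..., n. -/
def pcyc (k : ℕ) : Equiv.Perm ℕ := (List.range' 1 k).formPerm

lemma pcyc_pow_fix (m j x : ℕ) (h : x = 0 ∨ m < x) : (pcyc m ^ j) x = x := by
  induction j with
  | zero => rfl
  | succ n ih =>
    rw [pow_succ, Equiv.Perm.mul_apply, pcyc, List.formPerm_apply_of_notMem, ← pcyc, ih]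
    simp only [List.mem_range']
    omega

lemma pcyc_pow_apply (m j x : ℕ) (h1 : 1 ≤ x) (h2 : x ≤ m) :
    (pcyc m ^ j) x = (x - 1 + j) % m + 1 := by
  have hlen : (List.range' 1 m).length = m := List.length_range' ..
  have hx : x = (List.range' 1 m)[x-1]'(by rw [hlen]; omega) := by
    rw [List.getElem_range'_1]; omega
  conv_lhs => rw [pcyc, hx, List.formPerm_pow_apply_getElem _ (List.nodup_range' ..) j _
    (by rw [hlen]; omega)]
  simp only [hlen, List.getElem_range'_1]
  omega

lemma mod_shift (m j a : ℕ) (ha : a < m) : (a + j) % m = (a + j % m) % m := by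
  conv_lhs => rw [Nat.add_mod, Nat.mod_eq_of_lt ha]

lemma pcyc_pow_val_low (m j x : ℕ) (h1 : 1 ≤ x) (h2 : x + j % m ≤ m) :
    (pcyc m ^ j) x = x + j % m := by
  have hm : 0 < m := by omega
  rw [pcyc_pow_apply m j x h1 (by omega), mod_shift m j (x-1) (by omega),
    Nat.mod_eq_of_lt (by omega)]
  omega

lemma pcyc_pow_val_high (m j x : ℕ) (h1 : 1 ≤ x) (h2 : x ≤ m) (h3 : m < x + j % m) :
    (pcyc m ^ j) x = x + j % m - m := by
  have hm : 0 < m := by omega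
  have hj : j % m < m := Nat.mod_lt _ hm
  rw [pcyc_pow_apply m j x h1 h2, mod_shift m j (x-1) (by omega),
    Nat.mod_eq_sub_mod (by omega), Nat.mod_eq_of_lt (by omega)]
  omega

lemma pcyc_pow_mem (m j x : ℕ) (h1 : 1 ≤ x) (h2 : x ≤ m) :
    1 ≤ (pcyc m ^ j) x ∧ (pcyc m ^ j) x ≤ m := by
  have hm : 0 < m := by omega
  have hj : j % m < m := Nat.mod_lt _ hm
  rcases le_or_gt (x + j % m) m with h | h
  · rw [pcyc_pow_val_low m j x h1 h]; omega
  · rw [pcyc_pow_val_high m j x h1 h2 h]; omega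

lemma pcyc_pow_m (m j : ℕ) (hm : 0 < m) : (pcyc m ^ (m * j)) = 1 := by
  ext x
  rcases Nat.lt_or_ge x 1 with h | h
  · rw [pcyc_pow_fix m _ x (by omega)]; rfl
  rcases le_or_gt x m with h2 | h2
  · rw [pcyc_pow_val_low m _ x h (by rw [Nat.mul_mod_right]; omega), Nat.mul_mod_right]; rfl
  · rw [pcyc_pow_fix m _ x (by omega)]; rfl

lemma pcyc_inv_pow (m j : ℕ) (hm : 0 < m) :
    (pcyc m ^ j)⁻¹ = pcyc m ^ (j * (m - 1)) := by
  rw [inv_eq_iff_mul_eq_one, ← pow_add]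
  have : j + j * (m-1) = m * j := by cases m with | zero => omega | succ n => simp; ring
  rw [this, pcyc_pow_m m j hm]

def tpprod (a c : ℕ) (e : ℕ → ℕ) : Equiv.Perm ℕ :=
  ((List.range' a c).map fun i => pcyc i ^ e i).prod

lemma tpprod_fix (a c : ℕ) (e : ℕ → ℕ) (x : ℕ) (h : x = 0 ∨ a + c ≤ x) :
    tpprod a c e x = x := by
  induction c generalizing a with
  | zero => rfl
  | succ c ih =>
    rw [tpprod, List.range'_succ, List.map_cons, List.prod_cons, Equiv.Perm.mul_apply]
    rw [show ((List.range' (a+1) c).map fun i => pcyc i ^ e i).prod = tpprod (a+1) c e from rfl,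
      ih (a+1) (by omega), pcyc_pow_fix a _ x (by omega)]

lemma perm_fix_inv (g : Equiv.Perm ℕ) (x : ℕ) (h : g x = x) : g⁻¹ x = x := by
  conv_lhs => rw [← h]
  exact g.symm_apply_apply x

lemma fix_outside_mem (g : Equiv.Perm ℕ) (m : ℕ) (hfix : ∀ x, x = 0 ∨ m < x → g x = x)
    (v : ℕ) (hv : 1 ≤ v) (hvm : v ≤ m) : 1 ≤ g v ∧ g v ≤ m := by
  constructor
  · by_contra hc
    have : g v = g 0 := by rw [hfix 0 (Or.inl rfl)]; omega
    have := g.injective this; omega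
  · by_contra hc
    have : g (g v) = g v := hfix _ (Or.inr (by omega))
    have := g.injective this; omega

def Cyc (k : ℕ) (h : ℕ → ℕ) : Prop :=
  ∃ r, StrictMonoOn (fun v => h ((pcyc (k+1) ^ r) v)) (Set.Icc 1 (k+1))

lemma rot (k m j : ℕ) (hm : k + 1 ≤ m) (h : ℕ → ℕ)
    (hb : ∀ v, 1 ≤ v → v ≤ k + 1 → 1 ≤ h v ∧ h v ≤ m) (hc : Cyc k h) :
    Cyc k (fun v => (pcyc m ^ j) (h v)) := by
  obtain ⟨r, hr⟩ := hc
  set K := k + 1 with hK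
  set q : ℕ → ℕ := fun v => h ((pcyc K ^ r) v) with hq
  have hqb : ∀ v, 1 ≤ v → v ≤ K → 1 ≤ q v ∧ q v ≤ m := by
    intro v h1 h2
    have := pcyc_pow_mem K r v h1 h2
    exact hb _ this.1 this.2
  have hm0 : 0 < m := by omega
  set j0 := j % m with hj0
  have hj0m : j0 < m := Nat.mod_lt _ hm0
  set P : ℕ → Prop := fun w => 1 ≤ w ∧ w ≤ K ∧ q w ≤ m - j0 with hP
  have : DecidablePred P := fun _ => instDecidableAnd
  set s := Nat.findGreatest P K with hs
  have hsK : s ≤ K := Nat.findGreatest_le K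
  have hchar : ∀ w, 1 ≤ w → w ≤ K → (q w ≤ m - j0 ↔ w ≤ s) := by
    intro w h1 h2
    constructor
    · intro hw; exact Nat.le_findGreatest h2 ⟨h1, h2, hw⟩
    · intro hw
      have hs1 : 1 ≤ s := le_trans h1 hw
      have hPs : P s := (Nat.findGreatest_eq_iff.1 hs.symm).2.1 (by omega)
      calc q w ≤ q s := hr.monotoneOn (Set.mem_Icc.mpr ⟨h1, h2⟩)
                  (Set.mem_Icc.mpr ⟨hPs.1, hPs.2.1⟩) hw
        _ ≤ m - j0 := hPs.2.2
  have hbval : ∀ w, 1 ≤ w → w ≤ K → (pcyc K ^ s) w =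
      if w + s ≤ K then w + s else w + s - K := by
    intro w h1 h2
    rcases le_or_gt (w + s) K with hle | hgt
    · rw [if_pos hle, pcyc_pow_val_low K s w h1 (by
        have := Nat.mod_le s K; omega)]
      have : s % K = s := Nat.mod_eq_of_lt (by omega)
      omega
    · rw [if_neg (by omega)]
      rcases eq_or_lt_of_le hsK with heq | hlt
      · rw [heq, pcyc_pow_val_low K K w h1 (by rw [Nat.mod_self]; omega), Nat.mod_self]
        omega
      · have hsmod : s % K = s := Nat.mod_eq_of_lt hlt
        rw [pcyc_pow_val_high K s w h1 h2 (by omega), hsmod]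
  have hval : ∀ w, 1 ≤ w → w ≤ K → (pcyc m ^ j) (q w) =
      if w ≤ s then q w + j0 else q w + j0 - m := by
    intro w h1 h2
    have hqw := hqb w h1 h2
    rcases le_or_gt w s with hle | hgt
    · rw [if_pos hle]
      have : q w ≤ m - j0 := (hchar w h1 h2).2 hle
      rw [pcyc_pow_val_low m j (q w) hqw.1 (by omega)]
    · rw [if_neg (by omega)]
      have : ¬ (q w ≤ m - j0) := fun hcon => by have := (hchar w h1 h2).1 hcon; omega
      rw [pcyc_pow_val_high m j (q w) hqw.1 hqw.2 (by omega)]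
  refine ⟨r + s, ?_⟩
  intro v hv v' hv' hlt
  simp only [Set.mem_Icc] at hv hv'
  have hcomp : ∀ w, (pcyc K ^ (r + s)) w = (pcyc K ^ r) ((pcyc K ^ s) w) := by
    intro w; rw [pow_add, Equiv.Perm.mul_apply]
  show (pcyc m ^ j) (h ((pcyc K ^ (r + s)) v)) < (pcyc m ^ j) (h ((pcyc K ^ (r + s)) v'))
  rw [hcomp v, hcomp v']
  show (pcyc m ^ j) (q ((pcyc K ^ s) v)) < (pcyc m ^ j) (q ((pcyc K ^ s) v'))
  rw [hbval v hv.1 hv.2, hbval v' hv'.1 hv'.2]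
  have hqmono : ∀ w w', 1 ≤ w → w' ≤ K → w < w' → q w < q w' := by
    intro w w' h1 h2 hww
    exact hr (Set.mem_Icc.mpr ⟨h1, by omega⟩) (Set.mem_Icc.mpr ⟨by omega, h2⟩) hww
  rcases le_or_gt (v + s) K with c1 | c1 <;> rcases le_or_gt (v' + s) K with c2 | c2
  · rw [if_pos c1, if_pos c2, hval _ (by omega) (by omega), hval _ (by omega) (by omega),
      if_neg (by omega), if_neg (by omega)]
    have := hqmono (v + s) (v' + s) (by omega) (by omega) (by omega)
    have := (hqb (v + s) (by omega) (by omega)).1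
    have := (hqb (v' + s) (by omega) (by omega)).2
    have : ¬ (q (v + s) ≤ m - j0) := fun hcon => by
      have := (hchar (v + s) (by omega) (by omega)).1 hcon; omega
    omega
  · rw [if_pos c1, if_neg (by omega), hval _ (by omega) (by omega),
      hval _ (by omega) (by omega), if_neg (by omega), if_pos (by omega)]
    have := (hqb (v + s) (by omega) (by omega)).2
    have := (hqb (v' + s - K) (by omega) (by omega)).1
    omega
  · omega
  · rw [if_neg (by omega), if_neg (by omega), hval _ (by omega) (by omega),
      hval _ (by omega) (by omega), if_pos (by omega), if_pos (by omega)]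
    have := hqmono (v + s - K) (v' + s - K) (by omega) (by omega) (by omega)
    omega

lemma smono_id (K : ℕ) (hK : 1 ≤ K) (f : ℕ → ℕ) (hm : StrictMonoOn f (Set.Icc 1 K))
    (hb : ∀ v, 1 ≤ v → v ≤ K → 1 ≤ f v ∧ f v ≤ K) :
    ∀ v, 1 ≤ v → v ≤ K → f v = v := by
  have hlow : ∀ v, 1 ≤ v → v ≤ K → v ≤ f v := by
    intro v
    induction v with
    | zero => omega
    | succ w ih =>
      intro h1 h2
      rcases Nat.eq_zero_or_pos w with rfl | hw
      · exact (hb 1 le_rfl h2).1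
      · have ha := ih (by omega) (by omega)
        have hb2 := hm (Set.mem_Icc.mpr ⟨by omega, by omega⟩)
          (Set.mem_Icc.mpr ⟨by omega, h2⟩) (show w < w + 1 by omega)
        omega
  have hhigh : ∀ w, w ≤ K - 1 → f (K - w) ≤ K - w := by
    intro w
    induction w with
    | zero =>
      intro _
      simpa using (hb K (by omega) le_rfl).2
    | succ u ih =>
      intro h2
      have ha := ih (by omega)
      have hb2 := hm (Set.mem_Icc.mpr ⟨by omega, by omega⟩)
        (Set.mem_Icc.mpr ⟨by omega, by omega⟩) (show K - (u+1) < K - u by omega)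
      omega
  intro v h1 h2
  have ha := hlow v h1 h2
  have hb2 := hhigh (K - v) (by omega)
  have hc : K - (K - v) = v := by omega
  rw [hc] at hb2
  omega

lemma tpprod_concat (a c : ℕ) (e : ℕ → ℕ) :
    tpprod a (c+1) e = tpprod a c e * pcyc (a + c) ^ e (a + c) := by
  rw [tpprod, tpprod, List.range'_concat, List.map_append, List.prod_append]
  simp

lemma mod_cancel (K r : ℕ) (hK : 1 ≤ K) (h : (K - 1 + r) % K = K - 1) : r % K = 0 := by
  have h2 : (K - 1 + r) % K = (K - 1 + r % K) % K := mod_shift K r (K-1) (by omega)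
  have h3 : r % K < K := Nat.mod_lt _ (by omega)
  rcases Nat.lt_or_ge (K - 1 + r % K) K with hc | hc
  · rw [Nat.mod_eq_of_lt hc] at h2; omega
  · rw [Nat.mod_eq_sub_mod hc, Nat.mod_eq_of_lt (show K - 1 + r % K - K < K by omega)] at h2
    omega

lemma main_ex (k : ℕ) (hk1 : 1 ≤ k) : ∀ c (g : Equiv.Perm ℕ),
    (∀ x, x = 0 ∨ k + c < x → g x = x) →
    Cyc k (fun v => g⁻¹ v) →
    ∃ e : ℕ → ℕ, (∀ i, k + 1 ≤ i → i ≤ k + c → e i < i) ∧ g = tpprod (k+1) c e := by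
  intro c
  induction c with
  | zero =>
    intro g hfix hcyc
    refine ⟨fun _ => 0, by omega, ?_⟩
    have hginvfix : ∀ x, x = 0 ∨ k < x → g⁻¹ x = x := fun x hx =>
      perm_fix_inv g x (hfix x (by omega))
    obtain ⟨r, hr⟩ := hcyc
    set K := k + 1 with hK
    have hfb : ∀ v, 1 ≤ v → v ≤ K → 1 ≤ g⁻¹ ((pcyc K ^ r) v) ∧ g⁻¹ ((pcyc K ^ r) v) ≤ K := by
      intro v h1 h2
      have hmem := pcyc_pow_mem K r v h1 h2
      exact fix_outside_mem g⁻¹ K (fun x hx => hginvfix x (by omega)) _ hmem.1 hmem.2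
    have hid := smono_id K (by omega) _ hr hfb
    have hgval : ∀ v, 1 ≤ v → v ≤ K → (pcyc K ^ r) v = g v := by
      intro v h1 h2
      have := hid v h1 h2
      simp only at this
      calc (pcyc K ^ r) v = g (g⁻¹ ((pcyc K ^ r) v)) := (g.apply_symm_apply _).symm
        _ = g v := by rw [this]
    have hgK : g K = K := hfix K (by omega)
    have hrK : r % K = 0 := by
      have h1 := hgval K (by omega) le_rfl
      rw [pcyc_pow_apply K r K (by omega) le_rfl, hgK] at h1
      exact mod_cancel K r (by omega) (by omega)
    have hgid : ∀ v, 1 ≤ v → v ≤ K → g v = v := by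
      intro v h1 h2
      rw [← hgval v h1 h2, pcyc_pow_apply K r v h1 h2, mod_shift K r (v-1) (by omega), hrK,
        Nat.add_zero, Nat.mod_eq_of_lt (by omega)]
      omega
    ext x
    show g x = x
    rcases Nat.lt_or_ge x 1 with h | h
    · exact hfix x (by omega)
    rcases le_or_gt x K with h2 | h2
    · exact hgid x h h2
    · exact hfix x (by omega)
  | succ c ih =>
    intro g hfix hcyc
    set m := k + c + 1 with hm
    have hm0 : 0 < m := by omega
    have hginvfix : ∀ x, x = 0 ∨ m < x → g⁻¹ x = x := fun x hx =>
      perm_fix_inv g x (hfix x (by omega))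
    set u := g⁻¹ m with hu
    have hub : 1 ≤ u ∧ u ≤ m := fix_outside_mem g⁻¹ m hginvfix m (by omega) le_rfl
    set j := (m - u) % m with hj
    have hjm : j < m := Nat.mod_lt _ hm0
    have hjeq : j = m - u := Nat.mod_eq_of_lt (by omega)
    have hpju : (pcyc m ^ j) u = m := by
      rw [pcyc_pow_val_low m j u hub.1 (by rw [Nat.mod_eq_of_lt hjm]; omega),
        Nat.mod_eq_of_lt hjm]
      omega
    set g' := g * (pcyc m ^ j)⁻¹ with hg'
    have hg'fix : ∀ x, x = 0 ∨ k + c < x → g' x = x := by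
      intro x hx
      show g ((pcyc m ^ j)⁻¹ x) = x
      rcases hx with rfl | hgt
      · rw [perm_fix_inv _ _ (pcyc_pow_fix m j 0 (Or.inl rfl))]
        exact hfix 0 (Or.inl rfl)
      rcases Nat.lt_or_ge m x with h | h
      · rw [perm_fix_inv _ _ (pcyc_pow_fix m j x (Or.inr h))]
        exact hfix x (by omega)
      · have hxm : x = m := by omega
        have hiu : (pcyc m ^ j)⁻¹ x = u := by
          rw [hxm]
          exact Equiv.Perm.inv_eq_iff_eq.mpr hpju.symm
        rw [hiu, hu, hxm]
        exact g.apply_symm_apply m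
    have hg'inv : ∀ v, g'⁻¹ v = (pcyc m ^ j) (g⁻¹ v) := by
      intro v
      rw [hg', mul_inv_rev, inv_inv, Equiv.Perm.mul_apply]
    have hg'cyc : Cyc k (fun v => g'⁻¹ v) := by
      have heq : (fun v => g'⁻¹ v) = fun v => (pcyc m ^ j) (g⁻¹ v) := funext hg'inv
      rw [heq]
      exact rot k m j (by omega) (fun v => g⁻¹ v)
        (fun v h1 h2 => fix_outside_mem g⁻¹ m hginvfix v h1 (by omega)) hcyc
    obtain ⟨e', he1, he2⟩ := ih g' hg'fix hg'cyc
    refine ⟨Function.update e' m j, ?_, ?_⟩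
    · intro i hi1 hi2
      rcases eq_or_ne i m with rfl | hne
      · rw [Function.update_self]; omega
      · rw [Function.update_of_ne hne]
        exact he1 i hi1 (by omega)
    · have hcon : tpprod (k+1) (c+1) (Function.update e' m j) =
          tpprod (k+1) c (Function.update e' m j) * pcyc m ^ j := by
        rw [tpprod_concat]
        rw [show k+1+c = m from by omega, Function.update_self]
      have hsame : tpprod (k+1) c (Function.update e' m j) = tpprod (k+1) c e' := by
        rw [tpprod, tpprod]
        congr 1
        apply List.map_congr_left
        intro i hi
        have := List.mem_range'_1.1 hi
        rw [Function.update_of_ne (by omega)]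
      rw [hcon, hsame, ← he2, hg', inv_mul_cancel_right]

lemma cyc_tail (k : ℕ) (hk1 : 1 ≤ k) : ∀ c (e : ℕ → ℕ),
    Cyc k (fun v => (tpprod (k+1) c e)⁻¹ v) := by
  intro c
  induction c with
  | zero =>
    intro e
    refine ⟨0, fun a ha b hb hab => ?_⟩
    simpa [tpprod] using hab
  | succ c ih =>
    intro e
    set m := k + 1 + c with hm
    have ht : tpprod (k+1) (c+1) e = tpprod (k+1) c e * pcyc m ^ e m := tpprod_concat _ _ _
    have hfix : ∀ x, x = 0 ∨ m < x → (tpprod (k+1) c e)⁻¹ x = x := fun x hx =>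
      perm_fix_inv _ x (tpprod_fix (k+1) c e x (by omega))
    have hinv : ∀ v, (tpprod (k+1) (c+1) e)⁻¹ v =
        (pcyc m ^ (e m * (m - 1))) ((tpprod (k+1) c e)⁻¹ v) := by
      intro v
      rw [ht, mul_inv_rev, Equiv.Perm.mul_apply, pcyc_inv_pow m (e m) (by omega)]
    have heq : (fun v => (tpprod (k+1) (c+1) e)⁻¹ v) =
        fun v => (pcyc m ^ (e m * (m - 1))) ((tpprod (k+1) c e)⁻¹ v) := funext hinv
    rw [heq]
    exact rot k m (e m * (m-1)) (by omega) _
      (fun v h1 h2 => fix_outside_mem _ m hfix v h1 (by omega)) (ih e)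

lemma tpprod_split (a b c : ℕ) (e : ℕ → ℕ) :
    tpprod a (b + c) e = tpprod a b e * tpprod (a + b) c e := by
  rw [tpprod, tpprod, tpprod, ← List.range'_append_1, List.map_append,
    List.prod_append]

lemma tpprod_congr (a c : ℕ) (e e' : ℕ → ℕ) (h : ∀ i, a ≤ i → i < a + c → e i = e' i) :
    tpprod a c e = tpprod a c e' := by
  rw [tpprod, tpprod]
  congr 1
  apply List.map_congr_left
  intro i hi
  have := List.mem_range'_1.1 hi
  rw [h i this.1 this.2]

/-- The ordered composition `p_2^{e 2} ∘ p_3^{e 3} ∘ ⋯ ∘ p_n^{e n}`. -/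
def circProd (n : ℕ) (e : ℕ → ℕ) : Equiv.Perm ℕ :=
  ((List.range' 2 (n - 1)).map fun i => (pcyc i) ^ (e i)).prod

theorem stmt13 (n k : ℕ) (h2 : 2 ≤ k) (hk : k < n) (d : ℕ → ℕ)
    (π : Equiv.Perm ℕ) (hπ1 : ∀ i ≤ k + 1, π i = i) (hπ2 : ∀ i, n < i → π i = i)
    (σ : Equiv.Perm ℕ)
    (hσ : ∃ e : ℕ → ℕ, (∀ i ∈ Finset.Icc 2 n, e i < i) ∧
      (∀ i ∈ Finset.Icc 2 k, e i = d i) ∧ σ = circProd n e) :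
    ∃ e : ℕ → ℕ, (∀ i ∈ Finset.Icc 2 n, e i < i) ∧
      (∀ i ∈ Finset.Icc 2 k, e i = d i) ∧ π * σ = circProd n e := by
  obtain ⟨e, he1, he2, rfl⟩ := hσ
  have hsplit : circProd n e = tpprod 2 (k-1) e * tpprod (k+1) (n-k) e := by
    rw [show circProd n e = tpprod 2 (n-1) e from rfl,
      show n - 1 = (k-1) + (n-k) from by omega, tpprod_split,
      show 2 + (k-1) = k+1 from by omega]
  set H := tpprod 2 (k-1) e with hH
  set t := tpprod (k+1) (n-k) e with ht
  have hHfix : ∀ x, x = 0 ∨ k < x → H x = x := fun x hx =>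
    tpprod_fix 2 (k-1) e x (by omega)
  have htfix : ∀ x, x = 0 ∨ n < x → t x = x := fun x hx =>
    tpprod_fix (k+1) (n-k) e x (by omega)
  have hπinv : ∀ w, w ≤ k + 1 → π⁻¹ w = w := fun w hw => perm_fix_inv π w (hπ1 w hw)
  have hcomm : π * H = H * π := by
    ext x
    rw [Equiv.Perm.mul_apply, Equiv.Perm.mul_apply]
    rcases Nat.lt_or_ge x 1 with h0 | h1
    · have hx0 : x = 0 := by omega
      rw [hx0, hHfix 0 (Or.inl rfl), hπ1 0 (by omega), hHfix 0 (Or.inl rfl)]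
    rcases le_or_gt x k with hxk | hxk
    · rw [hπ1 x (by omega)]
      have hHx := fix_outside_mem H k hHfix x h1 hxk
      rw [hπ1 (H x) (by omega)]
    · rw [hHfix x (by omega)]
      have hπx : k + 1 ≤ π x := by
        by_contra hc
        have : π (π x) = π x := hπ1 (π x) (by omega)
        have := π.injective this
        omega
      rw [hHfix (π x) (by omega)]
  set g := π * t with hg
  have hgfix : ∀ x, x = 0 ∨ k + (n - k) < x → g x = x := by
    intro x hx
    rw [hg, Equiv.Perm.mul_apply]
    rcases hx with rfl | hgt
    · rw [htfix 0 (Or.inl rfl), hπ1 0 (by omega)]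
    · have hxn : n < x := by omega
      rw [htfix x (Or.inr hxn), hπ2 x hxn]
  have hgcyc : Cyc k (fun v => g⁻¹ v) := by
    obtain ⟨r, hr⟩ := cyc_tail k (by omega) (n-k) e
    refine ⟨r, ?_⟩
    have hkey : ∀ v, 1 ≤ v → v ≤ k + 1 →
        g⁻¹ ((pcyc (k+1) ^ r) v) = t⁻¹ ((pcyc (k+1) ^ r) v) := by
      intro v h1v h2v
      have hmem := pcyc_pow_mem (k+1) r v h1v h2v
      rw [hg, mul_inv_rev, Equiv.Perm.mul_apply, hπinv _ hmem.2]
    intro a ha b hb hab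
    simp only [Set.mem_Icc] at ha hb
    show g⁻¹ ((pcyc (k+1) ^ r) a) < g⁻¹ ((pcyc (k+1) ^ r) b)
    rw [hkey a ha.1 ha.2, hkey b hb.1 hb.2]
    exact hr (Set.mem_Icc.mpr ha) (Set.mem_Icc.mpr hb) hab
  obtain ⟨e'', hd1, hd2⟩ := main_ex k (by omega) (n-k) g hgfix hgcyc
  refine ⟨fun i => if i ≤ k then e i else e'' i, ?_, ?_, ?_⟩
  · intro i hi
    simp only [Finset.mem_Icc] at hi
    show (if i ≤ k then e i else e'' i) < i
    rcases le_or_gt i k with h | h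
    · rw [if_pos h]; exact he1 i (Finset.mem_Icc.mpr hi)
    · rw [if_neg (show ¬ i ≤ k by omega)]; exact hd1 i (by omega) (by omega)
  · intro i hi
    simp only [Finset.mem_Icc] at hi
    show (if i ≤ k then e i else e'' i) = d i
    rw [if_pos hi.2]
    exact he2 i (Finset.mem_Icc.mpr hi)
  · have hfinal : circProd n (fun i => if i ≤ k then e i else e'' i) =
        tpprod 2 (k-1) e * tpprod (k+1) (n-k) e'' := by
      rw [show circProd n (fun i => if i ≤ k then e i else e'' i) =
          tpprod 2 (n-1) (fun i => if i ≤ k then e i else e'' i) from rfl,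
        show n - 1 = (k-1) + (n-k) from by omega, tpprod_split,
        show 2 + (k-1) = k+1 from by omega]
      congr 1
      · exact tpprod_congr _ _ _ _ (fun i hi1 hi2 => by rw [if_pos (by omega)])
      · exact tpprod_congr _ _ _ _ (fun i hi1 hi2 => by rw [if_neg (by omega)])
    rw [hfinal, hsplit, ← hd2, hg, ← mul_assoc, hcomm, mul_assoc]
end
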